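/- Let w_1, …, w_k be positive integers with w_i ≤ B/2 for all i, where B = Σ_{i=1}^k w_i. Consider the cyclic DPG with agents N = {1,…,k}, relationship sets M_i = {i+1} for i < k and M_k = {1}, and ideal distances d_i(i+1) = w_i / B (indices taken cyclically). Then this DPG admits a jump stable location profile if and only if there exists a subset X ⊆ {1,…,k} with Σ_{i ∈ X} w_i = Σ_{i ∉ X} w_i. -/

import Mathlib

open Finset

/-- A distance preservation game (DPG): a finite set of agents `N`, for each agent `i` a
relationship set `M i ⊆ N \ {i}`, and an ideal distance `d i j ∈ [0,1]` for each `j ∈ M i`. -/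
structure DPG (N : Type) [Fintype N] [DecidableEq N] where
  M : N → Finset N
  notMem_self : ∀ i, i ∉ M i
  d : N → N → ℝ
  d_nonneg : ∀ i j, j ∈ M i → 0 ≤ d i j
  d_le_one : ∀ i j, j ∈ M i → d i j ≤ 1

variable {N : Type} [Fintype N] [DecidableEq N]

/-- The utility of agent `i` from agent `j` under location profile `A`. -/
def DPG.utilPair (I : DPG N) (A : N → ℝ) (i j : N) : ℝ :=
  1 - |(|A i - A j|) - I.d i j|

/-- The utility of agent `i` under location profile `A`. -/
def DPG.util (I : DPG N) (A : N → ℝ) (i : N) : ℝ :=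
  ∑ j ∈ I.M i, I.utilPair A i j

/-- The social welfare of a location profile. -/
def DPG.SW (I : DPG N) (A : N → ℝ) : ℝ := ∑ i, I.util A i

/-- A valid location profile: every agent is located in the unit interval. -/
def IsProfile (A : N → ℝ) : Prop := ∀ i, A i ∈ Set.Icc (0:ℝ) 1

/-- A location profile is jump stable if no agent can increase their utility by jumping
to another location in the unit interval. -/
def DPG.JumpStable (I : DPG N) (A : N → ℝ) : Prop :=
  ∀ i : N, ∀ x ∈ Set.Icc (0:ℝ) 1, I.util (Function.update A i x) i ≤ I.util A i

/-- A DPG is symmetric if `j ∈ M i` implies `i ∈ M j` and `d i j = d j i`. -/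
def DPG.Symmetric (I : DPG N) : Prop :=
  ∀ i j, j ∈ I.M i → i ∈ I.M j ∧ I.d i j = I.d j i

/-- The cyclic DPG built from positive integer weights `w i ≤ B/2` (with `B = ∑ w i`,
`M i = {i+1}` cyclically and `d i (i+1) = w i / B`) admits a jump stable location profile
iff the weights can be partitioned into two sets of equal total weight. -/
theorem stmt3 (k : ℕ) [NeZero k] (w : Fin k → ℕ) (hw : ∀ i, 0 < w i)
    (B : ℕ) (hB : B = ∑ i, w i) (hw2 : ∀ i, 2 * w i ≤ B)
    (I : DPG (Fin k)) (hM : ∀ i : Fin k, I.M i = {i + 1})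
    (hd : ∀ i : Fin k, I.d i (i + 1) = (w i : ℝ) / B) :
    (∃ A : Fin k → ℝ, IsProfile A ∧ I.JumpStable A) ↔
      ∃ X : Finset (Fin k), ∑ i ∈ X, w i = ∑ i ∈ Xᶜ, w i := by
  classical
  -- dispose of k = 1
  rcases eq_or_lt_of_le (Nat.one_le_iff_ne_zero.mpr (NeZero.ne k)) with h1 | h1
  · exfalso
    subst h1
    have h0 := I.notMem_self 0
    rw [hM] at h0
    exact h0 (Finset.mem_singleton.mpr (Subsingleton.elim 0 (0 + 1)))
  have hne : ∀ i : Fin k, i + 1 ≠ i := by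
    intro i h
    have h2 : i + 1 = i + 0 := by rw [add_zero]; exact h
    have h3 : (1 : Fin k) = 0 := add_left_cancel h2
    rw [Fin.one_eq_zero_iff] at h3
    omega
  have hB0 : 0 < B := by
    rw [hB]
    exact Finset.sum_pos (fun i _ => hw i) Finset.univ_nonempty
  have hBR : (0:ℝ) < (B:ℝ) := by exact_mod_cast hB0
  set δ : Fin k → ℝ := fun i => (w i : ℝ) / B with hδ
  have hδ0 : ∀ i, 0 < δ i := fun i => div_pos (by exact_mod_cast hw i) hBR
  have hδhalf : ∀ i, δ i ≤ 1/2 := by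
    intro i
    rw [hδ]
    rw [div_le_div_iff₀ hBR (by norm_num)]
    have h2 : (2:ℝ) * w i ≤ B := by exact_mod_cast hw2 i
    linarith
  have hutil : ∀ (A' : Fin k → ℝ) i, I.util A' i = 1 - |(|A' i - A' (i+1)|) - δ i| := by
    intro A' i
    rw [DPG.util, hM, Finset.sum_singleton, DPG.utilPair, hd]
  -- total of δ is 1
  have hδsum : ∑ i, δ i = 1 := by
    rw [hδ, ← Finset.sum_div]
    rw [div_eq_one_iff_eq (ne_of_gt hBR)]
    rw [hB]; push_cast; ring
  have key2 : ∀ A : Fin k → ℝ, (∀ i, |A i - A (i+1)| = δ i) → I.JumpStable A := by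
    intro A h i x hx
    rw [hutil, hutil]
    rw [Function.update_self, Function.update_of_ne (hne i), h i]
    have := abs_nonneg (|x - A (i+1)| - δ i)
    simp only [sub_self, abs_zero]
    linarith
  constructor
  · rintro ⟨A, hP, hJS⟩
    have habs : ∀ i, |A i - A (i+1)| = δ i := by
      intro i
      obtain ⟨x, hx, hxd⟩ : ∃ x ∈ Set.Icc (0:ℝ) 1, |x - A (i+1)| = δ i := by
        rcases le_or_gt (δ i) (A (i+1)) with hc | hc
        · refine ⟨A (i+1) - δ i, ⟨by linarith, ?_⟩, ?_⟩
          · have := (hP (i+1)).2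
            have := hδ0 i
            linarith
          · rw [show A (i+1) - δ i - A (i+1) = -(δ i) by ring, abs_neg,
              abs_of_pos (hδ0 i)]
        · refine ⟨A (i+1) + δ i, ⟨?_, ?_⟩, ?_⟩
          · have := (hP (i+1)).1
            have := hδ0 i
            linarith
          · have := hδhalf i
            linarith
          · rw [show A (i+1) + δ i - A (i+1) = δ i by ring, abs_of_pos (hδ0 i)]
      have hle := hJS i x hx
      rw [hutil, hutil, Function.update_self, Function.update_of_ne (hne i), hxd] at hle
      simp only [sub_self, abs_zero] at hle
      have h2 := abs_nonneg (|A i - A (i+1)| - δ i)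
      have h3 : |(|A i - A (i+1)|) - δ i| = 0 := by linarith
      have := abs_eq_zero.mp h3
      linarith [abs_eq_zero.mp h3]
    refine ⟨Finset.univ.filter (fun i => A i ≤ A (i+1)), ?_⟩
    have hdiff : ∀ i : Fin k,
        A (i+1) - A i = if A i ≤ A (i+1) then δ i else -δ i := by
      intro i
      have := habs i
      split_ifs with hc
      · rw [abs_sub_comm, abs_of_nonneg (by linarith)] at this
        linarith
      · rw [abs_of_pos (by linarith)] at this
        linarith
    have htel : ∑ i : Fin k, (A (i + 1) - A i) = 0 := by
      rw [Finset.sum_sub_distrib,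
        show ∑ i : Fin k, A (i+1) = ∑ i : Fin k, A i from
          Fintype.sum_equiv (Equiv.addRight 1) _ _ (fun i => rfl)]
      ring
    rw [Finset.sum_congr rfl (fun i _ => hdiff i), Finset.sum_ite] at htel
    have hXc : (Finset.univ.filter (fun i => A i ≤ A (i+1)))ᶜ =
        Finset.univ.filter (fun i => ¬ A i ≤ A (i+1)) := by
      rw [Finset.compl_filter]
    rw [hXc]
    have hsneg : ∑ i ∈ Finset.univ.filter (fun i => ¬ A i ≤ A (i+1)), (-δ i) =
        -∑ i ∈ Finset.univ.filter (fun i => ¬ A i ≤ A (i+1)), δ i :=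
      Finset.sum_neg_distrib _
    rw [hsneg] at htel
    have hreal : ∑ i ∈ Finset.univ.filter (fun i => A i ≤ A (i+1)), (w i : ℝ) =
        ∑ i ∈ Finset.univ.filter (fun i => ¬ A i ≤ A (i+1)), (w i : ℝ) := by
      have h1 : ∑ i ∈ Finset.univ.filter (fun i => A i ≤ A (i+1)), δ i =
          ∑ i ∈ Finset.univ.filter (fun i => ¬ A i ≤ A (i+1)), δ i := by linarith
      rw [hδ] at h1
      rw [← Finset.sum_div, ← Finset.sum_div, div_eq_div_iff (ne_of_gt hBR) (ne_of_gt hBR)] at h1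
      exact mul_right_cancel₀ (ne_of_gt hBR) h1
    exact_mod_cast hreal
  · rintro ⟨X, hX⟩
    set s : Fin k → ℝ := fun i => if i ∈ X then δ i else -δ i with hs
    have hXsum : ∑ i ∈ X, δ i = 1/2 ∧ ∑ i ∈ Xᶜ, δ i = 1/2 := by
      have hsplit : ∑ i ∈ X, δ i + ∑ i ∈ Xᶜ, δ i = 1 := by
        rw [Finset.sum_add_sum_compl, hδsum]
      have heq : ∑ i ∈ X, δ i = ∑ i ∈ Xᶜ, δ i := by
        rw [hδ, ← Finset.sum_div, ← Finset.sum_div]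
        congr 1
        exact_mod_cast hX
      constructor <;> linarith
    have htot : ∑ i, s i = 0 := by
      have hsi : ∀ i : Fin k, s i = (if i ∈ X then δ i else 0) + (if i ∈ Xᶜ then -δ i else 0) := by
        intro i; rw [hs]; by_cases hi : i ∈ X <;> simp [hi]
      rw [Finset.sum_congr rfl (fun i _ => hsi i), Finset.sum_add_distrib,
        Finset.sum_ite_mem, Finset.sum_ite_mem, Finset.univ_inter, Finset.univ_inter,
        Finset.sum_neg_distrib]
      linarith [hXsum.1, hXsum.2]
    set s' : ℕ → ℝ := fun n => if h : n < k then s ⟨n, h⟩ else 0 with hs'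
    have hs'val : ∀ i : Fin k, s' i.val = s i := by
      intro i
      rw [hs']
      simp [i.isLt]
    have htot' : ∑ j ∈ Finset.range k, s' j = 0 := by
      rw [← Fin.sum_univ_eq_sum_range]
      rw [Finset.sum_congr rfl (fun i _ => hs'val i)]
      exact htot
    have hub : ∀ n, n ≤ k → ∑ j ∈ Finset.range n, s' j ≤ 1/2 := by
      intro n hn
      have h1 : ∑ j ∈ Finset.range n, s' j ≤ ∑ j ∈ Finset.range n, max (s' j) 0 :=
        Finset.sum_le_sum (fun j _ => le_max_left _ _)
      have h2 : ∑ j ∈ Finset.range n, max (s' j) 0 ≤ ∑ j ∈ Finset.range k, max (s' j) 0 :=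
        Finset.sum_le_sum_of_subset_of_nonneg (Finset.range_subset_range.mpr hn)
          (fun j _ _ => le_max_right _ _)
      have h3 : ∑ j ∈ Finset.range k, max (s' j) 0 = ∑ i ∈ X, δ i := by
        rw [← Fin.sum_univ_eq_sum_range (fun j => max (s' j) 0) k]
        have hterm : ∀ i : Fin k, max (s' i.val) 0 = if i ∈ X then δ i else 0 := by
          intro i; rw [hs'val i, hs]
          by_cases hi : i ∈ X
          · simp [hi, le_of_lt (hδ0 i)]
          · simp [hi, le_of_lt (hδ0 i)]
        rw [Finset.sum_congr rfl (fun i _ => hterm i), Finset.sum_ite_mem, Finset.univ_inter]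
      linarith [hXsum.1, h1, h2, h3.le, h3.ge]
    have hlb : ∀ n, n ≤ k → -(1/2) ≤ ∑ j ∈ Finset.range n, s' j := by
      intro n hn
      have h1 : ∑ j ∈ Finset.range n, min (s' j) 0 ≤ ∑ j ∈ Finset.range n, s' j :=
        Finset.sum_le_sum (fun j _ => min_le_left _ _)
      have h2 : ∑ j ∈ Finset.range k, min (s' j) 0 ≤ ∑ j ∈ Finset.range n, min (s' j) 0 := by
        have := Finset.sum_le_sum_of_subset_of_nonneg (Finset.range_subset_range.mpr hn)
          (f := fun j => -(min (s' j) 0)) (fun j _ _ => neg_nonneg.mpr (min_le_right _ _))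
        have ha : ∀ m : ℕ, ∑ j ∈ Finset.range m, -(min (s' j) 0) =
            -∑ j ∈ Finset.range m, min (s' j) 0 := fun m => Finset.sum_neg_distrib _
        rw [ha, ha] at this
        linarith
      have h3 : ∑ j ∈ Finset.range k, min (s' j) 0 = -∑ i ∈ Xᶜ, δ i := by
        rw [← Fin.sum_univ_eq_sum_range (fun j => min (s' j) 0) k]
        have hterm : ∀ i : Fin k, min (s' i.val) 0 = if i ∈ Xᶜ then -δ i else 0 := by
          intro i; rw [hs'val i, hs]
          by_cases hi : i ∈ X
          · simp [hi, Finset.mem_compl, le_of_lt (hδ0 i)]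
          · simp [hi, Finset.mem_compl, le_of_lt (hδ0 i)]
        rw [Finset.sum_congr rfl (fun i _ => hterm i), Finset.sum_ite_mem, Finset.univ_inter,
          Finset.sum_neg_distrib]
      linarith [hXsum.2]
    set A : Fin k → ℝ := fun i => 1/2 + ∑ j ∈ Finset.range i.val, s' j with hA
    have hstep : ∀ i : Fin k, A (i + 1) - A i = s i := by
      intro i
      rcases lt_or_eq_of_le (Nat.lt_iff_add_one_le.mp i.isLt) with hlt | heq
      · have hv : ((i + 1 : Fin k)).val = i.val + 1 := by
          rw [Fin.val_add, Fin.val_one', Nat.mod_eq_of_lt h1, Nat.mod_eq_of_lt hlt]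
        rw [hA]
        simp only [hv]
        rw [Finset.sum_range_succ]
        rw [hs'val i]
        ring
      · -- i.val = k - 1, i + 1 = 0
        have hv : ((i + 1 : Fin k)).val = 0 := by
          rw [Fin.val_add, Fin.val_one', Nat.mod_eq_of_lt h1, heq, Nat.mod_self]
        rw [hA]
        simp only [hv, Finset.range_zero, Finset.sum_empty]
        have : ∑ j ∈ Finset.range (i.val + 1), s' j = 0 := by
          rw [show i.val + 1 = k from heq]
          exact htot'
        rw [Finset.sum_range_succ, hs'val i] at this
        linarith
    refine ⟨A, ?_, key2 A ?_⟩
    · intro i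
      have h1 := hub i.val (le_of_lt i.isLt)
      have h2 := hlb i.val (le_of_lt i.isLt)
      constructor
      · rw [hA]; dsimp only; linarith
      · rw [hA]; dsimp only; linarith
    · intro i
      rw [abs_sub_comm, hstep i, hs]
      by_cases hi : i ∈ X
      · simp [hi, abs_of_pos (hδ0 i)]
      · simp [hi, abs_of_pos (hδ0 i)]
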